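/- Let E be a set, N ≥ 1 an integer, and g : {1,…,N} × {1,…,N} → (E → ℝ) a family of real-valued functions on E satisfying the symmetry g(l,j) = g(j,l) for all l, j. For any points x_1, …, x_N ∈ E define A(l,j) = 1 if g(l,j)(x_l) ≥ g(l,j)(x_j) and A(l,j) = 0 otherwise. Then A(l,l) = 1 for every l, A(l,j) + A(j,l) ≥ 1 for every l, j, and consequently, for every α ∈ [0,1], the number of indices l with Σ_{j=1}^{N} A(l,j) ≤ Nα − 1 is at most 2αN. -/

import Mathlib

open scoped Classical

/-- For a symmetric family of score functions `g l j = g j l : E → ℝ` and points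
`x 1, …, x N`, the comparison matrix `A l j = 1{g l j (x l) ≥ g l j (x j)}` has
ones on the diagonal, satisfies `A l j + A j l ≥ 1`, and consequently for every
`α ∈ [0,1]` the number of rows with row sum at most `N*α - 1` is at most `2*α*N`. -/
theorem comparison_matrix_strange_set (E : Type*) (N : ℕ) (hN : 1 ≤ N)
    (g : Fin N → Fin N → E → ℝ) (hsym : ∀ l j, g l j = g j l)
    (x : Fin N → E)
    (A : Fin N → Fin N → ℝ)
    (hA : ∀ l j, A l j = if g l j (x l) ≥ g l j (x j) then 1 else 0) :
    (∀ l, A l l = 1) ∧ (∀ l j, 1 ≤ A l j + A j l) ∧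
      (∀ α : ℝ, 0 ≤ α → α ≤ 1 →
        ((Finset.univ.filter (fun l : Fin N => ∑ j, A l j ≤ (N : ℝ) * α - 1)).card : ℝ)
          ≤ 2 * α * N) := by
  have hA0 : ∀ l j, 0 ≤ A l j := by
    intro l j; rw [hA]; split_ifs <;> norm_num
  have hdiag : ∀ l, A l l = 1 := by
    intro l; rw [hA]; simp
  have hpair : ∀ l j, 1 ≤ A l j + A j l := by
    intro l j
    rw [hA, hA, hsym j l]
    rcases le_total (g l j (x l)) (g l j (x j)) with h | h <;> split_ifs <;> linarith
  refine ⟨hdiag, hpair, ?_⟩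
  intro α hα0 hα1
  set S := Finset.univ.filter (fun l : Fin N => ∑ j, A l j ≤ (N : ℝ) * α - 1) with hS
  set m : ℕ := S.card with hm
  rcases Nat.eq_zero_or_pos m with hm0 | hmpos
  · rw [hm0]
    push_cast
    positivity
  have hm1 : (1 : ℝ) ≤ (m : ℝ) := by exact_mod_cast hmpos
  have hcomm : ∑ l ∈ S, ∑ j ∈ S, A j l = ∑ l ∈ S, ∑ j ∈ S, A l j :=
    Finset.sum_comm
  have key1 : (m : ℝ) * m ≤ 2 * ∑ l ∈ S, ∑ j ∈ S, A l j := by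
    have h1 : (m : ℝ) * m = ∑ l ∈ S, ∑ j ∈ S, (1 : ℝ) := by simp [mul_comm, hm]
    rw [h1, two_mul]
    calc ∑ l ∈ S, ∑ j ∈ S, (1 : ℝ)
        ≤ ∑ l ∈ S, ∑ j ∈ S, (A l j + A j l) := by
          apply Finset.sum_le_sum; intro l _
          apply Finset.sum_le_sum; intro j _
          exact hpair l j
      _ = (∑ l ∈ S, ∑ j ∈ S, A l j) + ∑ l ∈ S, ∑ j ∈ S, A j l := by
          simp [Finset.sum_add_distrib]
      _ = (∑ l ∈ S, ∑ j ∈ S, A l j) + ∑ l ∈ S, ∑ j ∈ S, A l j := by rw [hcomm]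
  have key2 : ∑ l ∈ S, ∑ j ∈ S, A l j ≤ (m : ℝ) * ((N : ℝ) * α - 1) := by
    calc ∑ l ∈ S, ∑ j ∈ S, A l j
        ≤ ∑ l ∈ S, ∑ j, A l j := by
          apply Finset.sum_le_sum; intro l _
          exact Finset.sum_le_sum_of_subset_of_nonneg (Finset.subset_univ S)
            (fun j _ _ => hA0 l j)
      _ ≤ ∑ l ∈ S, ((N : ℝ) * α - 1) := by
          apply Finset.sum_le_sum; intro l hl
          exact (Finset.mem_filter.mp hl).2
      _ = (m : ℝ) * ((N : ℝ) * α - 1) := by rw [Finset.sum_const, nsmul_eq_mul, hm]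
  nlinarith [key1, key2, hm1]
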